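/- Let f : ℝⁿ → ℝ be convex and C¹, and let ξ, ζ be gradient curves of f (solutions of ξ' = −∇f∘ξ). Then the function t ↦ |ζ(t) − ξ(t)|² is nonincreasing on [0,T); in particular its derivative satisfies (d/dt)|ζ(t)−ξ(t)|² = −2⟨ζ(t)−ξ(t), ∇f(ζ(t)) − ∇f(ξ(t))⟩ ≤ 0. -/

import Mathlib

open RealInnerProductSpace

/-- Gradient monotonicity for a convex `C¹` function. -/
lemma grad_mono_aux {n : ℕ} {f : EuclideanSpace ℝ (Fin n) → ℝ}
    (hconv : ConvexOn ℝ Set.univ f) (hC1 : ContDiff ℝ 1 f)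
    (x y : EuclideanSpace ℝ (Fin n)) :
    0 ≤ ⟪y - x, gradient f y - gradient f x⟫ := by
  set v := y - x with hv
  -- φ s = f (x + s • v) is convex on ℝ
  have hdiff : Differentiable ℝ f := hC1.differentiable one_ne_zero
  have hgrad : ∀ z, HasGradientAt f (gradient f z) z := fun z =>
    (hdiff z).hasGradientAt
  have hline : ∀ s : ℝ, HasDerivAt (fun s : ℝ => x + s • v) v s := by
    intro s
    simpa using ((hasDerivAt_id s).smul_const v).const_add x
  have hφ : ∀ s : ℝ, HasDerivAt (fun s : ℝ => f (x + s • v))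
      ⟪gradient f (x + s • v), v⟫ s := by
    intro s
    have hf : HasFDerivAt f (InnerProductSpace.toDual ℝ _ (gradient f (x + s • v)))
        (x + s • v) := (hgrad (x + s • v))
    have h := hf.comp_hasDerivAt s (hline s)
    simp at h ⊢
    exact h
  have hconvφ : ConvexOn ℝ Set.univ (fun s : ℝ => f (x + s • v)) := by
    have h := hconv.comp_affineMap (AffineMap.lineMap x y : ℝ →ᵃ[ℝ] _)
    have heq : (f ∘ ⇑(AffineMap.lineMap x y : ℝ →ᵃ[ℝ] _))
        = fun s : ℝ => f (x + s • v) := by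
      funext s
      simp [AffineMap.lineMap_apply, hv, add_comm]
    rw [heq] at h
    simpa using h
  have h01 : (0:ℝ) < 1 := one_pos
  have h1 := hconvφ.le_slope_of_hasDerivAt (Set.mem_univ 0) (Set.mem_univ 1) h01 (hφ 0)
  have h2 := hconvφ.slope_le_of_hasDerivAt (Set.mem_univ 0) (Set.mem_univ 1) h01 (hφ 1)
  have h3 : ⟪gradient f (x + (0:ℝ) • v), v⟫ ≤ ⟪gradient f (x + (1:ℝ) • v), v⟫ :=
    h1.trans h2
  have hx0 : x + (0:ℝ) • v = x := by simp
  have hy1 : x + (1:ℝ) • v = y := by simp [hv]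
  rw [hx0, hy1] at h3
  have : 0 ≤ ⟪gradient f y - gradient f x, v⟫ := by
    rw [inner_sub_left]; linarith
  rw [real_inner_comm] at this
  exact this

/-- along two gradient curves of a convex `C¹` function, the squared
distance is nonincreasing, with derivative `−2⟨ζ−ξ, ∇f(ζ)−∇f(ξ)⟩ ≤ 0`. -/
theorem gradient_flow_sq_dist_nonincreasing (n : ℕ) (T : ℝ)
    (f : EuclideanSpace ℝ (Fin n) → ℝ)
    (hconv : ConvexOn ℝ Set.univ f)
    (hC1 : ContDiff ℝ 1 f)
    (ξ ζ : ℝ → EuclideanSpace ℝ (Fin n))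
    (hξ : ∀ t ∈ Set.Ico (0:ℝ) T, HasDerivAt ξ (-(gradient f (ξ t))) t)
    (hζ : ∀ t ∈ Set.Ico (0:ℝ) T, HasDerivAt ζ (-(gradient f (ζ t))) t) :
    AntitoneOn (fun t => ‖ζ t - ξ t‖ ^ 2) (Set.Ico (0:ℝ) T) ∧
    ∀ t ∈ Set.Ico (0:ℝ) T,
      HasDerivAt (fun t => ‖ζ t - ξ t‖ ^ 2)
        (-2 * ⟪ζ t - ξ t, gradient f (ζ t) - gradient f (ξ t)⟫) t ∧
      -2 * ⟪ζ t - ξ t, gradient f (ζ t) - gradient f (ξ t)⟫ ≤ 0 := by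
  -- derivative of the squared norm
  have hder : ∀ t ∈ Set.Ico (0:ℝ) T,
      HasDerivAt (fun t => ‖ζ t - ξ t‖ ^ 2)
        (-2 * ⟪ζ t - ξ t, gradient f (ζ t) - gradient f (ξ t)⟫) t := by
    intro t ht
    have hu : HasDerivAt (fun t => ζ t - ξ t)
        (-(gradient f (ζ t)) - -(gradient f (ξ t))) t := (hζ t ht).sub (hξ t ht)
    have hinner : HasDerivAt (fun s => ⟪ζ s - ξ s, ζ s - ξ s⟫)
        (⟪ζ t - ξ t, (-(gradient f (ζ t)) - -(gradient f (ξ t)))⟫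
          + ⟪(-(gradient f (ζ t)) - -(gradient f (ξ t))), ζ t - ξ t⟫) t :=
      hu.inner ℝ hu
    have heq : (fun s => ⟪ζ s - ξ s, ζ s - ξ s⟫ : ℝ → ℝ)
        = fun s => ‖ζ s - ξ s‖ ^ 2 := by
      funext s; rw [real_inner_self_eq_norm_sq]
    rw [heq] at hinner
    rw [show -(gradient f (ζ t)) - -(gradient f (ξ t))
        = -(gradient f (ζ t) - gradient f (ξ t)) by abel] at hinner
    convert hinner using 1
    rw [inner_neg_right, inner_neg_left, real_inner_comm]
    ring
  have hnp : ∀ t ∈ Set.Ico (0:ℝ) T,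
      -2 * ⟪ζ t - ξ t, gradient f (ζ t) - gradient f (ξ t)⟫ ≤ 0 := by
    intro t ht
    have := grad_mono_aux hconv hC1 (ξ t) (ζ t)
    nlinarith
  refine ⟨?_, fun t ht => ⟨hder t ht, hnp t ht⟩⟩
  -- antitone from nonpositive derivative
  have hcont : ContinuousOn (fun t => ‖ζ t - ξ t‖ ^ 2) (Set.Ico (0:ℝ) T) :=
    fun t ht => (hder t ht).continuousAt.continuousWithinAt
  refine antitoneOn_of_deriv_nonpos (convex_Ico 0 T) hcont ?_ ?_
  · intro t ht
    rw [interior_Ico] at ht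
    exact (hder t ⟨le_of_lt ht.1, ht.2⟩).differentiableAt.differentiableWithinAt
  · intro t ht
    rw [interior_Ico] at ht
    have ht' : t ∈ Set.Ico (0:ℝ) T := ⟨le_of_lt ht.1, ht.2⟩
    rw [(hder t ht').deriv]
    exact hnp t ht'
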